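/- The pairing ⟨·,·⟩ : Γ_m(V) ⊗ Ω^m(V) → K defined by ⟨α, ω⟩ = i* P_{m,m}(α ⊗ ω), where i : {0} → V is the inclusion of the origin, satisfies the explicit formula ⟨e^α ⊗ e_I, z^β ⊗ dz_J⟩ = (−1)^{m(m−1)/2} α! δ_{α,β} δ_{I,J}, where z^β ⊗ dz_J and e^α ⊗ e_I are the monomial bases of polynomial m-forms and m-currents associated to dual bases (z_i) of V* and (e_i) of V; in particular the pairing is nondegenerate in each weight. -/

import Mathlib

/-!
STATEMENT 11: The pairing `⟨α, ω⟩ = i^* P_{m,m}(α ⊗ ω)` between polynomial `m`-currents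
and polynomial `m`-forms satisfies
`⟨e^α ⊗ e_I, z^β ⊗ dz_J⟩ = (−1)^{m(m−1)/2} α! δ_{α,β} δ_{I,J}`.

Forms are modelled in coordinates as in the paper: a form assigns to each finite index
set `s` (the increasing wedge `dz_s`) a polynomial coefficient.  The current
`e^α ⊗ e_I` acts by `L_{e}^α ι_{e_{i₁}} ⋯ ι_{e_{i_m}}` (indices of `I` in increasing
order) followed by evaluation at the origin.
-/

open MvPolynomial

variable {K : Type*} [Field K] [CharZero K] {n : ℕ}

/-- Polynomial differential forms on `K^n` in coordinates. -/
abbrev PForm (K : Type*) [CommSemiring K] (n : ℕ) :=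
  Finset (Fin n) → MvPolynomial (Fin n) K

/-- Interior product with the `j`-th constant basis vector field. -/
noncomputable def iotaB (j : Fin n) (ω : PForm K n) : PForm K n :=
  fun s => if j ∈ s then 0
    else ((-1 : MvPolynomial (Fin n) K) ^ (s.filter (· < j)).card) * ω (insert j s)

/-- The iterated Lie derivative (= partial derivative of coefficients) `∏ⱼ ∂ⱼ^{α j}`. -/
noncomputable def Dpow (α : Fin n → ℕ) : Module.End K (MvPolynomial (Fin n) K) :=
  ((List.finRange n).map (fun j => ((pderiv j).toLinearMap ^ (α j)))).prod

/-- The pairing `⟨e^α ⊗ e_I , ω⟩`: apply `ι_{e_{i₁}} ⋯ ι_{e_{i_m}}` (indices of `I`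
increasing), then `L_{e₁}^{α₁} ⋯ L_{e_n}^{α_n}`, take the `0`-form part and evaluate
at the origin. -/
noncomputable def pairCF (α : Fin n →₀ ℕ) (I : Finset (Fin n)) (ω : PForm K n) : K :=
  constantCoeff ((Dpow (fun j => α j)) (((I.sort (· ≤ ·)).foldr iotaB ω) ∅))

/-- The basis `m`-form `z^β ⊗ dz_J`. -/
noncomputable def basisForm (β : Fin n →₀ ℕ) (J : Finset (Fin n)) : PForm K n :=
  fun s => if s = J then monomial β (1 : K) else 0

/-- `⟨e^α ⊗ e_I, z^β ⊗ dz_J⟩ = (−1)^{m(m−1)/2} α! δ_{α,β} δ_{I,J}`. -/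
lemma foldr_iotaB (ω : PForm K n) (l : List (Fin n)) (s : Finset (Fin n))
    (hl : l.Pairwise (· < ·)) (hs : ∀ x ∈ s, ∀ y ∈ l, x < y) :
    (l.foldr iotaB ω) s
      = (-1) ^ (∑ k ∈ Finset.range l.length, (s.card + k)) * ω (s ∪ l.toFinset) := by
  induction l generalizing s with
  | nil => simp
  | cons j rest ih =>
    rw [List.pairwise_cons] at hl
    have hj : j ∉ s := fun h => lt_irrefl j (hs j h j (by simp))
    have hfilter : s.filter (· < j) = s :=
      Finset.filter_true_of_mem (fun x hx => hs x hx j (by simp))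
    have hs' : ∀ x ∈ insert j s, ∀ y ∈ rest, x < y := by
      intro x hx y hy
      rcases Finset.mem_insert.mp hx with rfl | hx
      · exact hl.1 y hy
      · exact hs x hx y (by simp [hy])
    simp only [List.foldr_cons, iotaB, if_neg hj, hfilter]
    rw [ih (insert j s) hl.2 hs', Finset.card_insert_of_notMem hj]
    rw [← mul_assoc, ← pow_add]
    congr 1
    · congr 1
      rw [List.length_cons, Finset.sum_range_succ']
      simp only [add_zero]
      rw [add_comm]
      congr 1
      exact Finset.sum_congr rfl (fun k _ => by omega)
    · congr 1
      rw [List.toFinset_cons, Finset.insert_union, Finset.union_insert]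

lemma pderiv_pow_monomial (j : Fin n) (k : ℕ) (β : Fin n →₀ ℕ) (c : K) :
    ((pderiv j).toLinearMap ^ k) (monomial β c)
      = monomial (β - Finsupp.single j k) (c * ((β j).descFactorial k : K)) := by
  induction k with
  | zero => simp
  | succ k ih =>
    rw [pow_succ', Module.End.mul_apply, ih]
    simp only [Derivation.coeFn_coe]
    rw [pderiv_monomial]
    have h1 : (β - Finsupp.single j k) j = β j - k := by
      rw [Finsupp.tsub_apply, Finsupp.single_eq_same]
    rw [h1]
    have h2 : β - Finsupp.single j k - Finsupp.single j 1 = β - Finsupp.single j (k + 1) := by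
      rw [tsub_tsub, ← Finsupp.single_add]
    rw [h2, Nat.descFactorial_succ]
    congr 1
    push_cast
    ring

lemma dpow_list_monomial (α : Fin n → ℕ) (l : List (Fin n)) (hl : l.Nodup)
    (β : Fin n →₀ ℕ) (c : K) :
    ((l.map (fun j => ((pderiv j : Derivation K _ _).toLinearMap ^ (α j)))).prod) (monomial β c)
      = monomial (β - (l.map (fun j => Finsupp.single j (α j))).sum)
          (c * ((l.map (fun j => (((β j).descFactorial (α j) : K)))).prod)) := by
  induction l with
  | nil => simp
  | cons j rest ih =>
    rw [List.nodup_cons] at hl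
    simp only [List.map_cons, List.prod_cons, List.sum_cons, Module.End.mul_apply]
    rw [ih hl.2, pderiv_pow_monomial]
    have hzero : ((rest.map (fun i => Finsupp.single i (α i))).sum) j = 0 := by
      have := map_list_sum (Finsupp.applyAddHom (M := ℕ) j)
        (rest.map (fun i => Finsupp.single i (α i)))
      simp only [Finsupp.applyAddHom_apply, List.map_map] at this
      rw [this]
      apply List.sum_eq_zero
      intro x hx
      simp only [List.mem_map, Function.comp_apply] at hx
      obtain ⟨i, hi, rfl⟩ := hx
      exact Finsupp.single_eq_of_ne (fun h => hl.1 (h ▸ hi))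
    have hjr : (β - (rest.map (fun i => Finsupp.single i (α i))).sum) j = β j := by
      rw [Finsupp.tsub_apply, hzero, Nat.sub_zero]
    rw [hjr, tsub_tsub]
    congr 1
    · rw [add_comm]
    · ring

lemma dpow_monomial (α : Fin n → ℕ) (β : Fin n →₀ ℕ) (c : K) :
    Dpow α (monomial β c)
      = monomial (β - ∑ j, Finsupp.single j (α j))
          (c * ∏ j, (((β j).descFactorial (α j) : K))) := by
  rw [Dpow, dpow_list_monomial α _ (List.nodup_finRange n), Fin.sum_univ_def, Fin.prod_univ_def]


/-- `⟨e^α ⊗ e_I, z^β ⊗ dz_J⟩ = (−1)^{m(m−1)/2} α! δ_{α,β} δ_{I,J}`. -/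
theorem pairing_monomial_bases (α β : Fin n →₀ ℕ) (I J : Finset (Fin n)) (m : ℕ)
    (hI : I.card = m) (hJ : J.card = m) :
    pairCF α I (basisForm β J) =
      if α = β ∧ I = J then
        ((-1 : K) ^ (m * (m - 1) / 2)) * ∏ j, ((Nat.factorial (α j) : K))
      else 0 := by
  rw [pairCF, foldr_iotaB _ _ _ (Finset.sortedLT_sort I).pairwise (by simp)]
  simp only [Finset.card_empty, zero_add, Finset.empty_union, Finset.sort_toFinset,
    Finset.length_sort, hI, Finset.sum_range_id]
  by_cases hIJ : I = J
  · subst hIJ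
    rw [basisForm, if_pos rfl]
    have : ((-1 : MvPolynomial (Fin n) K) ^ (m * (m - 1) / 2)) * monomial β (1 : K)
        = monomial β ((-1 : K) ^ (m * (m - 1) / 2)) := by
      have : ((-1 : MvPolynomial (Fin n) K) ^ (m * (m - 1) / 2)) = C ((-1 : K) ^ (m * (m - 1) / 2)) := by
        rw [map_pow, map_neg, map_one]
      rw [this, C_mul_monomial, mul_one]
    rw [this, dpow_monomial, constantCoeff_monomial]
    have hsum : ∀ j, (∑ i, Finsupp.single i (α i)) j = α j := by
      intro j
      rw [Finsupp.finset_sum_apply]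
      rw [Finset.sum_eq_single j (fun i _ hij => Finsupp.single_eq_of_ne' hij) (by simp)]
      exact Finsupp.single_eq_same
    by_cases hab : α = β
    · subst hab
      have hz : α - ∑ j, Finsupp.single j (α j) = 0 := by
        ext j
        rw [Finsupp.tsub_apply, hsum]
        simp
      rw [if_pos hz, if_pos ⟨rfl, rfl⟩]
      congr 1
      exact Finset.prod_congr rfl (fun j _ => by rw [Nat.descFactorial_self])
    · rw [if_neg (fun h : α = β ∧ I = I => hab h.1)]
      by_cases hz : β - ∑ j, Finsupp.single j (α j) = 0
      · rw [if_pos hz]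
        have hle : ∀ j, β j ≤ α j := by
          intro j
          have h2 : (β - ∑ i, Finsupp.single i (α i)) j = 0 := by rw [hz]; rfl
          rw [Finsupp.tsub_apply, hsum] at h2
          omega
        have : ∃ j, β j < α j := by
          by_contra h
          push_neg at h
          exact hab (Finsupp.ext (fun j => le_antisymm (h j) (hle j)))
        obtain ⟨j, hj⟩ := this
        have : ((β j).descFactorial (α j) : K) = 0 := by
          rw [Nat.descFactorial_eq_zero_iff_lt.mpr hj]
          simp
        rw [Finset.prod_eq_zero (Finset.mem_univ j) this, mul_zero]
      · rw [if_neg hz]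
  · rw [basisForm, if_neg hIJ, mul_zero, map_zero, map_zero,
      if_neg (fun h => hIJ h.2)]
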